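/- Let ψ: ℝ → ℝ be C¹ with ψ(0)=1, ψ even, and suppose there exist C>0 and δ>1 such that |ψ(x)| + |x·ψ'(x)| ≤ C·(1+x²)^{-δ/2} for all x ∈ ℝ. Let A be a bounded self-adjoint operator on a complex separable Hilbert space H, let λ ∈ ℝ, and for a > 0 let ψ_a(A−λ) denote the operator obtained by applying the continuous functional calculus for A to the continuous function t ↦ ψ((t−λ)/a). If there exists f ∈ H with ‖f‖ = 1 such that lim_{a→0⁺} ⟨f, ψ_a(A−λ) f⟩ exists and is nonzero, then λ is an eigenvalue of A, i.e. there exists a nonzero g ∈ H with A g = λ g. -/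

import Mathlib

open MeasureTheory Filter Real Set Topology InnerProductSpace

/-- Theorem 2.11 (1): if for some unit vector `f` the quantity `⟨f, ψ_a(A-λ) f⟩` has a
nonzero limit as `a → 0⁺`, then `λ` is an eigenvalue of the bounded self-adjoint
operator `A`. Here `ψ_a(A-λ)` is defined by the continuous functional calculus. -/
theorem nonzero_limit_implies_eigenvalue
    {H : Type*} [NormedAddCommGroup H] [InnerProductSpace ℂ H] [CompleteSpace H]
    [TopologicalSpace.SeparableSpace H]
    (ψ : ℝ → ℝ) (hC1 : ContDiff ℝ 1 ψ) (hψ0 : ψ 0 = 1)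
    (heven : ∀ x : ℝ, ψ (-x) = ψ x)
    (hdecay : ∃ C > (0:ℝ), ∃ δ > (1:ℝ), ∀ x : ℝ,
      |ψ x| + |x * deriv ψ x| ≤ C * (1 + x ^ 2) ^ (-δ / 2))
    (A : H →L[ℂ] H) (hA : IsSelfAdjoint A) (l : ℝ)
    (f : H) (hf : ‖f‖ = 1) (L : ℂ) (hL : L ≠ 0)
    (hlim : Tendsto
      (fun a : ℝ => ⟪f, (cfc (fun t : ℝ => ψ ((t - l) / a)) A) f⟫_ℂ)
      (𝓝[>] 0) (𝓝 L)) :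
    ∃ g : H, g ≠ 0 ∧ A g = (l : ℂ) • g := by
  obtain ⟨C, hC, δ, hδ, hd⟩ := hdecay
  have hψcont : Continuous ψ := hC1.continuous
  have hdψ : ∀ x : ℝ, |ψ x| ≤ C * (1 + x ^ 2) ^ (-δ / 2) := fun x =>
    le_trans (le_add_of_nonneg_right (abs_nonneg _)) (hd x)
  have hbase : ∀ x : ℝ, (1:ℝ) ≤ 1 + x ^ 2 := fun x => by nlinarith
  -- pointwise bounds
  have hbd1 : ∀ x : ℝ, |ψ x| ≤ C := by
    intro x
    have h2 : (1 + x ^ 2 : ℝ) ^ (-δ / 2) ≤ 1 :=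
      Real.rpow_le_one_of_one_le_of_nonpos (hbase x) (by linarith)
    calc |ψ x| ≤ C * (1 + x ^ 2) ^ (-δ / 2) := hdψ x
      _ ≤ C * 1 := mul_le_mul_of_nonneg_left h2 hC.le
      _ = C := mul_one C
  have hbd2 : ∀ x : ℝ, |x * ψ x| ≤ C := by
    intro x
    have hxle : |x| ≤ (1 + x ^ 2 : ℝ) ^ (δ / 2) := by
      have h1 : |x| ≤ Real.sqrt (1 + x ^ 2) := Real.abs_le_sqrt (by nlinarith)
      have h2 : Real.sqrt (1 + x ^ 2) = (1 + x ^ 2 : ℝ) ^ ((1:ℝ)/2) := by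
        rw [Real.sqrt_eq_rpow]
      have h3 : (1 + x ^ 2 : ℝ) ^ ((1:ℝ)/2) ≤ (1 + x ^ 2 : ℝ) ^ (δ / 2) :=
        Real.rpow_le_rpow_of_exponent_le (hbase x) (by linarith)
      rw [h2] at h1; exact h1.trans h3
    have hpos : (0:ℝ) < (1 + x ^ 2 : ℝ) ^ (δ / 2) :=
      Real.rpow_pos_of_pos (by nlinarith) _
    have hneg : (1 + x ^ 2 : ℝ) ^ (-δ / 2) = ((1 + x ^ 2 : ℝ) ^ (δ / 2))⁻¹ := by
      rw [← Real.rpow_neg (by nlinarith : (0:ℝ) ≤ 1 + x ^ 2)]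
      ring_nf
    calc |x * ψ x| = |x| * |ψ x| := abs_mul x (ψ x)
      _ ≤ (1 + x ^ 2 : ℝ) ^ (δ / 2) * (C * (1 + x ^ 2) ^ (-δ / 2)) :=
          mul_le_mul hxle (hdψ x) (abs_nonneg _) hpos.le
      _ = C * ((1 + x ^ 2 : ℝ) ^ (δ / 2) * ((1 + x ^ 2 : ℝ) ^ (δ / 2))⁻¹) := by
          rw [hneg]; ring
      _ = C := by rw [mul_inv_cancel₀ hpos.ne', mul_one]
  -- the operator B = A - l • 1
  set B : H →L[ℂ] H := A - algebraMap ℝ (H →L[ℂ] H) l with hBdef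
  have hBid : cfc (fun t : ℝ => t - l) A = B := by
    rw [cfc_sub (fun t : ℝ => t) (fun _ : ℝ => l) A, cfc_id' ℝ A, cfc_const l A]
  have hB : IsSelfAdjoint B := by
    refine hA.sub ?_
    rw [IsSelfAdjoint]
    simp [Algebra.algebraMap_eq_smul_one, star_smul]
  have hBapp : ∀ g : H, B g = A g - (l : ℂ) • g := by
    intro g
    simp [hBdef, Algebra.algebraMap_eq_smul_one, Complex.coe_smul]
  -- reformulate the conclusion
  by_contra hcon
  push_neg at hcon
  have hinj : ∀ g : H, B g = 0 → g = 0 := by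
    intro g hg
    by_contra hg0
    exact hcon g hg0 (by rw [← sub_eq_zero, ← hBapp g, hg])
  -- the range of B is dense
  have hdense : Dense ((LinearMap.range (B : H →ₗ[ℂ] H) : Submodule ℂ H) : Set H) := by
    have horth : (LinearMap.range (B : H →ₗ[ℂ] H) : Submodule ℂ H)ᗮ = ⊥ := by
      rw [Submodule.eq_bot_iff]
      intro u hu
      have h0 : ∀ w : H, ⟪B w, u⟫_ℂ = 0 := fun w =>
        (Submodule.mem_orthogonal _ u).mp hu (B w) (LinearMap.mem_range_self _ w)
      have hBu : B u = 0 := by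
        have := h0 (B u)
        rw [← ContinuousLinearMap.adjoint_inner_right, hB.adjoint_eq] at this
        exact inner_self_eq_zero.mp this
      exact hinj u hBu
    have := (Submodule.topologicalClosure_eq_top_iff (K := LinearMap.range (B : H →ₗ[ℂ] H))).mpr horth
    rw [dense_iff_closure_eq, ← Submodule.topologicalClosure_coe, this]
    rfl
  -- key estimates, valid for a > 0
  have hval : ∀ a : ℝ, 0 < a →
      ‖(cfc (fun t : ℝ => ψ ((t - l) / a)) A) f‖ ≤ C ∧
      ‖B ((cfc (fun t : ℝ => ψ ((t - l) / a)) A) f)‖ ≤ C * a := by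
    intro a ha
    have hcont : Continuous (fun t : ℝ => ψ ((t - l) / a)) := by fun_prop
    constructor
    · calc ‖(cfc (fun t : ℝ => ψ ((t - l) / a)) A) f‖
          ≤ ‖cfc (fun t : ℝ => ψ ((t - l) / a)) A‖ * ‖f‖ := ContinuousLinearMap.le_opNorm _ f
        _ ≤ C * 1 := by
            refine mul_le_mul ?_ hf.le (norm_nonneg f) hC.le
            exact norm_cfc_le hC.le (fun x _ => by
              simpa [Real.norm_eq_abs] using hbd1 ((x - l)/a))
        _ = C := mul_one C
    · have hmul : cfc (fun t : ℝ => (t - l) * ψ ((t - l) / a)) A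
          = B * cfc (fun t : ℝ => ψ ((t - l) / a)) A := by
        rw [cfc_mul (fun t : ℝ => t - l) (fun t : ℝ => ψ ((t - l) / a)) A
          (Continuous.continuousOn (by fun_prop)) hcont.continuousOn, hBid]
      have hnorm : ‖cfc (fun t : ℝ => (t - l) * ψ ((t - l) / a)) A‖ ≤ C * a := by
        refine norm_cfc_le (by positivity) (fun x _ => ?_)
        have hs : |x - l| = a * |(x - l) / a| := by
          rw [abs_div, abs_of_pos ha]; field_simp
        rw [Real.norm_eq_abs]
        calc |(x - l) * ψ ((x - l) / a)|
            = |x - l| * |ψ ((x - l) / a)| := abs_mul _ _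
          _ = a * (|(x - l) / a| * |ψ ((x - l) / a)|) := by rw [hs]; ring
          _ = a * |(x - l) / a * ψ ((x - l) / a)| := by rw [abs_mul]
          _ ≤ a * C := mul_le_mul_of_nonneg_left (hbd2 _) ha.le
          _ = C * a := mul_comm a C
      calc ‖B ((cfc (fun t : ℝ => ψ ((t - l) / a)) A) f)‖
          = ‖(cfc (fun t : ℝ => (t - l) * ψ ((t - l) / a)) A) f‖ := by
            rw [hmul]; rfl
        _ ≤ ‖cfc (fun t : ℝ => (t - l) * ψ ((t - l) / a)) A‖ * ‖f‖ :=
            ContinuousLinearMap.le_opNorm _ f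
        _ ≤ C * a * 1 := mul_le_mul hnorm hf.le (norm_nonneg f) (by positivity)
        _ = C * a := mul_one _
  -- main estimate: ‖L‖ ≤ ε * C for every ε > 0
  have hmain : ∀ ε : ℝ, 0 < ε → ‖L‖ ≤ ε * C := by
    intro ε hε
    obtain ⟨y, hy, hyd⟩ := hdense.exists_dist_lt f hε
    obtain ⟨w, hw⟩ := hy
    have hfw : ‖f - B w‖ < ε := by rwa [dist_eq_norm, ← hw] at hyd
    have hev : ∀ᶠ a in 𝓝[>] (0:ℝ),
        ‖⟪f, (cfc (fun t : ℝ => ψ ((t - l) / a)) A) f⟫_ℂ‖ ≤ ε * C + ‖w‖ * (C * a) := by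
      filter_upwards [self_mem_nhdsWithin] with a (ha : (0:ℝ) < a)
      obtain ⟨h1, h2⟩ := hval a ha
      set v := (cfc (fun t : ℝ => ψ ((t - l) / a)) A) f with hv
      have hsplit : ⟪f, v⟫_ℂ = ⟪f - B w, v⟫_ℂ + ⟪B w, v⟫_ℂ := by
        rw [← inner_add_left]; congr 1; abel
      have hBw : ⟪B w, v⟫_ℂ = ⟪w, B v⟫_ℂ := by
        nth_rewrite 1 [← hB.adjoint_eq]
        exact ContinuousLinearMap.adjoint_inner_left B v w
      calc ‖⟪f, v⟫_ℂ‖ ≤ ‖⟪f - B w, v⟫_ℂ‖ + ‖⟪B w, v⟫_ℂ‖ := by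
            rw [hsplit]; exact norm_add_le _ _
        _ ≤ ‖f - B w‖ * ‖v‖ + ‖w‖ * ‖B v‖ := by
            rw [hBw]; exact add_le_add (norm_inner_le_norm _ _) (norm_inner_le_norm _ _)
        _ ≤ ε * C + ‖w‖ * (C * a) := by
            refine add_le_add ?_ (mul_le_mul_of_nonneg_left h2 (norm_nonneg w))
            exact mul_le_mul hfw.le h1 (norm_nonneg _) hε.le
    have hrhs : Tendsto (fun a : ℝ => ε * C + ‖w‖ * (C * a)) (𝓝[>] (0:ℝ)) (𝓝 (ε * C)) := by
      have hc : Continuous (fun a : ℝ => ε * C + ‖w‖ * (C * a)) := by fun_prop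
      have h1 : Tendsto (fun a : ℝ => ε * C + ‖w‖ * (C * a)) (𝓝 0)
          (𝓝 (ε * C + ‖w‖ * (C * 0))) := hc.tendsto 0
      have h2 := h1.mono_left (nhdsWithin_le_nhds (s := Set.Ioi (0:ℝ)))
      simpa using h2
    exact le_of_tendsto_of_tendsto (hlim.norm) hrhs hev
  -- conclude L = 0, contradiction
  have hL0 : ‖L‖ ≤ 0 := by
    by_contra hpos
    push_neg at hpos
    have h := hmain (‖L‖ / (2 * C)) (by positivity)
    have h2 : ‖L‖ / (2 * C) * C = ‖L‖ / 2 := by field_simp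
    rw [h2] at h
    linarith
  exact hL (norm_le_zero_iff.mp hL0)
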